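/- Let p be a nonzero prime ideal of O_K with absolute norm N(p) = q. For all integers 0 ≤ i ≤ ℓ, the minimum Euclidean distances of the lattices L_ℓ = τ(p^ℓ) and L_i = τ(p^i) satisfy d_E(L_ℓ)² / d_E(L_i)² ≤ q^{2(ℓ-i)/m} · |D_K|^{1/m}, where D_K is the discriminant of K and m = [K:ℚ]. -/

import Mathlib

open scoped BigOperators
open MeasureTheory

noncomputable section

/-- The index set for `ℝ^{s+2t}`: `s` real coordinates and `t` pairs of coordinates. -/
abbrev PackIdx (s t : ℕ) := Fin s ⊕ Fin t × Fin 2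

/-- The canonical embedding `τ : K → ℝ^{s+2t}`,
`τ(α) = (ρ₁(α),…,ρ_s(α), √2·Re σ₁(α), √2·Im σ₁(α), …, √2·Re σ_t(α), √2·Im σ_t(α))`. -/
def tauEmb {K : Type*} [Field K] {s t : ℕ}
    (ρ : Fin s → (K →+* ℝ)) (σ : Fin t → (K →+* ℂ)) (α : K) :
    EuclideanSpace ℝ (PackIdx s t) :=
  (EuclideanSpace.equiv (PackIdx s t) ℝ).symm <|
    Sum.elim (fun i => ρ i α)
      (fun p => if p.2 = (0 : Fin 2) then Real.sqrt 2 * (σ p.1 α).re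
                else Real.sqrt 2 * (σ p.1 α).im)

/-- The system of `s + 2t` field embeddings `K → ℂ` determined by the data `ρ, σ`:
the real embeddings `ρᵢ` and the complex embeddings `σⱼ` together with their conjugates. -/
def embSystem {K : Type*} [Field K] {s t : ℕ}
    (ρ : Fin s → (K →+* ℝ)) (σ : Fin t → (K →+* ℂ)) : PackIdx s t → (K →+* ℂ) :=
  Sum.elim (fun i => Complex.ofRealHom.comp (ρ i))
    (fun p => if p.2 = (0 : Fin 2) then σ p.1 else (starRingEnd ℂ).comp (σ p.1))

/-- `ρ, σ` list exactly the real embeddings and the pairs of complex-conjugate embeddings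
of `K`, without repetition: the associated system of `s+2t` embeddings `K → ℂ` is a
bijective enumeration of all field embeddings `K → ℂ`. -/
def IsEmbSystem {K : Type*} [Field K] {s t : ℕ}
    (ρ : Fin s → (K →+* ℝ)) (σ : Fin t → (K →+* ℂ)) : Prop :=
  Function.Bijective (embSystem ρ σ)

/-- The minimum (infimal) Euclidean distance between two distinct points of `P`. -/
def minDist {E : Type*} [MetricSpace E] (P : Set E) : ℝ :=
  sInf {d : ℝ | ∃ x ∈ P, ∃ y ∈ P, x ≠ y ∧ dist x y = d}

/-- The volume `V_N` of the unit ball in `ℝ^N` (with index set `ι`, `N = |ι|`). -/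
def unitBallVol (ι : Type*) [Fintype ι] : ℝ :=
  (volume (Metric.ball (0 : EuclideanSpace ℝ ι) 1)).toReal

/-- The packing density
`Δ(P) = limsup_{R→∞} |P ∩ B(R)| · r^N · V_N / vol(B(R+r))`, where `r = d_E(P)/2`. -/
def packDensity {ι : Type*} [Fintype ι] (P : Set (EuclideanSpace ℝ ι)) : ℝ :=
  Filter.limsup (fun R : ℝ =>
    (Nat.card (P ∩ Metric.closedBall 0 R : Set (EuclideanSpace ℝ ι)) : ℝ) *
      (minDist P / 2) ^ (Fintype.card ι) * unitBallVol ι /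
      (volume (Metric.closedBall (0 : EuclideanSpace ℝ ι) (R + minDist P / 2))).toReal)
    Filter.atTop

/-- `L_I = τ(I)`, the image in `ℝ^{s+2t}` of an ideal `I` of the ring of integers under the
canonical embedding. -/
def idealImage {K : Type*} [Field K] [NumberField K] {s t : ℕ}
    (ρ : Fin s → (K →+* ℝ)) (σ : Fin t → (K →+* ℂ))
    (I : Ideal (NumberField.RingOfIntegers K)) : Set (EuclideanSpace ℝ (PackIdx s t)) :=
  (fun a : NumberField.RingOfIntegers K =>
    tauEmb ρ σ (algebraMap (NumberField.RingOfIntegers K) K a)) '' (I : Set _)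

/-- The coordinatewise extension `τ : K^n → ℝ^{mn}`. -/
def tauEmbN {K : Type*} [Field K] {s t : ℕ} {n : ℕ}
    (ρ : Fin s → (K →+* ℝ)) (σ : Fin t → (K →+* ℂ)) (c : Fin n → K) :
    EuclideanSpace ℝ (Fin n × PackIdx s t) :=
  (EuclideanSpace.equiv (Fin n × PackIdx s t) ℝ).symm fun p => tauEmb ρ σ (c p.1) p.2

/-- The Cartesian product `L^n ⊆ ℝ^{mn}` of `n` copies of `L ⊆ ℝ^m`. -/
def prodSet {ι : Type*} (n : ℕ) (L : Set (EuclideanSpace ℝ ι)) :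
    Set (EuclideanSpace ℝ (Fin n × ι)) :=
  {x | ∀ j : Fin n,
    ((EuclideanSpace.equiv ι ℝ).symm fun i => (EuclideanSpace.equiv (Fin n × ι) ℝ) x (j, i)) ∈ L}

/-- `S` is a valid alphabet set at level `i`: a set of `q` elements of `p^i` containing `0`
whose residues modulo `p^{i+1}` represent the `q` distinct elements of `p^i/p^{i+1}`. -/
def IsRepSet {K : Type*} [Field K] [NumberField K]
    (p : Ideal (NumberField.RingOfIntegers K)) (i q : ℕ)
    (S : Set (NumberField.RingOfIntegers K)) : Prop :=
  S ⊆ (p ^ i : Ideal (NumberField.RingOfIntegers K)) ∧ (0 : NumberField.RingOfIntegers K) ∈ S ∧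
    Nat.card S = q ∧
    (∀ x ∈ S, ∀ y ∈ S, x ≠ y → x - y ∉ (p ^ (i + 1) : Ideal (NumberField.RingOfIntegers K))) ∧
    (∀ z ∈ (p ^ i : Ideal (NumberField.RingOfIntegers K)), ∃ a ∈ S,
      z - a ∈ (p ^ (i + 1) : Ideal (NumberField.RingOfIntegers K)))

/-- Hamming distance between two words. -/
def hDist {n : ℕ} {A : Type*} (u v : Fin n → A) : ℕ := Nat.card {j : Fin n // u j ≠ v j}

/-- The minimum Hamming distance of a code `C`. -/
def codeMinDist {n : ℕ} {A : Type*} (C : Set (Fin n → A)) : ℕ :=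
  sInf {d : ℕ | ∃ u ∈ C, ∃ v ∈ C, u ≠ v ∧ hDist u v = d}

/-- `C` is an `(n, M, d)`-code over the alphabet set `S`. -/
def IsCode {A : Type*} {n : ℕ} (S : Set A) (M d : ℕ) (C : Set (Fin n → A)) : Prop :=
  (∀ c ∈ C, ∀ j, c j ∈ S) ∧ Nat.card C = M ∧ codeMinDist C = d

/-- The translate `τ(c) + P` of `P` by the embedded codeword `c`. -/
def wordTranslate {K : Type*} [Field K] [NumberField K] {s t n : ℕ}
    (ρ : Fin s → (K →+* ℝ)) (σ : Fin t → (K →+* ℂ))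
    (c : Fin n → NumberField.RingOfIntegers K)
    (P : Set (EuclideanSpace ℝ (Fin n × PackIdx s t))) :
    Set (EuclideanSpace ℝ (Fin n × PackIdx s t)) :=
  {z | ∃ x ∈ P, z = tauEmbN ρ σ (fun j => algebraMap (NumberField.RingOfIntegers K) K (c j)) + x}

/-- The concatenation `τ(C) + P = { τ(c) + p : c ∈ C, p ∈ P }`. -/
def codeTranslate {K : Type*} [Field K] [NumberField K] {s t n : ℕ}
    (ρ : Fin s → (K →+* ℝ)) (σ : Fin t → (K →+* ℂ))
    (C : Set (Fin n → NumberField.RingOfIntegers K))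
    (P : Set (EuclideanSpace ℝ (Fin n × PackIdx s t))) :
    Set (EuclideanSpace ℝ (Fin n × PackIdx s t)) :=
  {z | ∃ c ∈ C, ∃ x ∈ P,
    z = tauEmbN ρ σ (fun j => algebraMap (NumberField.RingOfIntegers K) K (c j)) + x}

/-- The concatenation `τ(𝒞) + P = { Σ_{i<ℓ} τ(cᵢ) + p : cᵢ ∈ Cᵢ, p ∈ P }` of a family of codes. -/
def famTranslate {K : Type*} [Field K] [NumberField K] {s t n ℓ : ℕ}
    (ρ : Fin s → (K →+* ℝ)) (σ : Fin t → (K →+* ℂ))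
    (C : Fin ℓ → Set (Fin n → NumberField.RingOfIntegers K))
    (P : Set (EuclideanSpace ℝ (Fin n × PackIdx s t))) :
    Set (EuclideanSpace ℝ (Fin n × PackIdx s t)) :=
  {z | ∃ c : Fin ℓ → (Fin n → NumberField.RingOfIntegers K), (∀ i, c i ∈ C i) ∧ ∃ x ∈ P,
    z = (∑ i : Fin ℓ,
      tauEmbN ρ σ (fun j => algebraMap (NumberField.RingOfIntegers K) K (c i j))) + x}



open scoped nonZeroDivisors
open NumberField NumberField.InfinitePlace NumberField.mixedEmbedding ENNReal

set_option maxHeartbeats 1000000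

lemma aux_minkowski {K : Type*} [Field K] [NumberField K]
    (J : Ideal (NumberField.RingOfIntegers K)) (hJ : J ≠ ⊥) {c : ℝ} (hc0 : 0 < c)
    (hc : (Ideal.absNorm J : ℝ) * Real.sqrt |(NumberField.discr K : ℝ)| <
      c ^ Module.finrank ℚ K) :
    ∃ α : NumberField.RingOfIntegers K, α ∈ J ∧ α ≠ 0 ∧
      ∀ φ : K →+* ℂ, ‖φ (algebraMap (NumberField.RingOfIntegers K) K α)‖ < c := by
  classical
  have hJne : (J : FractionalIdeal (NumberField.RingOfIntegers K)⁰ K) ≠ 0 := by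
    rwa [ne_eq, FractionalIdeal.coeIdeal_eq_zero]
  set I : (FractionalIdeal (NumberField.RingOfIntegers K)⁰ K)ˣ := Units.mk0 _ hJne with hI
  set f : InfinitePlace K → NNReal := fun _ => c.toNNReal with hf
  have hvol : minkowskiBound K I < volume (convexBodyLT K f) := by
    rw [convexBodyLT_volume]
    have hprod : (∏ w : InfinitePlace K, (f w) ^ (mult w)) = c.toNNReal ^ Module.finrank ℚ K := by
      simp only [hf]
      rw [Finset.prod_pow_eq_pow_sum, sum_mult_eq]
    rw [hprod, ENNReal.coe_pow, minkowskiBound, volume_fundamentalDomain_fractionalIdealLatticeBasis,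
      volume_fundamentalDomain_latticeBasis, mixedEmbedding.finrank, hI, Units.val_mk0,
      FractionalIdeal.coeIdeal_absNorm]
    have hfin1 : ENNReal.ofReal ((Ideal.absNorm J : ℚ) : ℝ) *
        ((2 : ℝ≥0∞)⁻¹ ^ nrComplexPlaces K * NNReal.sqrt ‖(NumberField.discr K : ℤ)‖₊) *
        2 ^ Module.finrank ℚ K ≠ ⊤ :=
      ENNReal.mul_ne_top (ENNReal.mul_ne_top ENNReal.ofReal_ne_top
        (ENNReal.mul_ne_top (ENNReal.pow_ne_top (ENNReal.inv_ne_top.mpr two_ne_zero))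
          ENNReal.coe_ne_top)) (ENNReal.pow_ne_top ENNReal.ofNat_ne_top)
    have hfin2 : (↑(convexBodyLTFactor K) * (c.toNNReal : ℝ≥0∞) ^ Module.finrank ℚ K : ℝ≥0∞)
        ≠ ⊤ :=
      ENNReal.mul_ne_top ENNReal.coe_ne_top (ENNReal.pow_ne_top ENNReal.coe_ne_top)
    rw [← ENNReal.toReal_lt_toReal hfin1 hfin2]
    simp only [ENNReal.toReal_mul, ENNReal.toReal_pow, ENNReal.toReal_inv,
      ENNReal.toReal_ofReal (by positivity : (0:ℝ) ≤ ((Ideal.absNorm J : ℚ) : ℝ)),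
      ENNReal.toReal_ofNat, ENNReal.coe_toReal]
    have hsq : ((NNReal.sqrt ‖(NumberField.discr K : ℤ)‖₊ : NNReal) : ℝ)
        = Real.sqrt |(NumberField.discr K : ℝ)| := by
      rw [Real.coe_sqrt, coe_nnnorm, Int.norm_eq_abs]
    have hfac : ((convexBodyLTFactor K : NNReal) : ℝ)
        = 2 ^ nrRealPlaces K * Real.pi ^ nrComplexPlaces K := by
      simp [convexBodyLTFactor, NNReal.coe_mul, NNReal.coe_pow, NNReal.coe_real_pi]
    rw [hsq, hfac, Real.coe_toNNReal _ hc0.le]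
    have hrank : nrRealPlaces K + 2 * nrComplexPlaces K = Module.finrank ℚ K :=
      card_add_two_mul_card_eq_rank K
    set r1 := nrRealPlaces K
    set r2 := nrComplexPlaces K
    set N : ℝ := ((Ideal.absNorm J : ℚ) : ℝ) with hNdef
    set d : ℝ := Real.sqrt |(NumberField.discr K : ℝ)| with hddef
    have hd0 : (0:ℝ) ≤ d := Real.sqrt_nonneg _
    have hN0 : (0:ℝ) ≤ N := by positivity
    have hNd : N * d < c ^ Module.finrank ℚ K := by
      have : N = ((Ideal.absNorm J : ℕ) : ℝ) := by push_cast [hNdef]; ring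
      rwa [this]
    calc N * (2⁻¹ ^ r2 * d) * 2 ^ Module.finrank ℚ K
        = 2 ^ r1 * 2 ^ r2 * (N * d) := by
          rw [← hrank, pow_add, two_mul, pow_add, inv_pow]
          have h2 : ((2:ℝ) ^ r2)⁻¹ * 2 ^ r2 = 1 := inv_mul_cancel₀ (by positivity)
          calc N * (((2:ℝ) ^ r2)⁻¹ * d) * (2 ^ r1 * (2 ^ r2 * 2 ^ r2))
              = 2 ^ r1 * 2 ^ r2 * (N * d) * (((2:ℝ) ^ r2)⁻¹ * 2 ^ r2) := by ring
            _ = 2 ^ r1 * 2 ^ r2 * (N * d) := by rw [h2, mul_one]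
      _ ≤ 2 ^ r1 * Real.pi ^ r2 * (N * d) := by
          have hpp : (2:ℝ) ^ r2 ≤ Real.pi ^ r2 :=
            pow_le_pow_left₀ (by norm_num) Real.two_le_pi r2
          have := mul_le_mul_of_nonneg_left hpp (by positivity : (0:ℝ) ≤ 2 ^ r1)
          exact mul_le_mul_of_nonneg_right this (by positivity)
      _ < 2 ^ r1 * Real.pi ^ r2 * c ^ Module.finrank ℚ K := by
          have hpos : (0:ℝ) < 2 ^ r1 * Real.pi ^ r2 := by positivity
          exact mul_lt_mul_of_pos_left hNd hpos
  obtain ⟨a, haI, ha0, hlt⟩ := exists_ne_zero_mem_ideal_lt K I hvol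
  have haI' : a ∈ (J : FractionalIdeal (NumberField.RingOfIntegers K)⁰ K) := haI
  rw [FractionalIdeal.mem_coeIdeal] at haI'
  obtain ⟨α, hαJ, rfl⟩ := haI'
  refine ⟨α, hαJ, ?_, ?_⟩
  · rintro rfl; exact ha0 (map_zero _)
  · intro φ
    have := hlt (InfinitePlace.mk φ)
    rw [InfinitePlace.apply] at this
    simpa [hf, Real.coe_toNNReal _ hc0.le] using this


section tauAux

variable {K : Type*} [Field K] {s t : ℕ} (ρ : Fin s → (K →+* ℝ)) (σ : Fin t → (K →+* ℂ))

lemma tauEmb_apply (α : K) (k : PackIdx s t) :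
    tauEmb ρ σ α k = Sum.elim (fun i => ρ i α)
      (fun p => if p.2 = (0 : Fin 2) then Real.sqrt 2 * (σ p.1 α).re
                else Real.sqrt 2 * (σ p.1 α).im) k := rfl

lemma tauEmb_sub (u v : K) :
    tauEmb ρ σ (u - v) = tauEmb ρ σ u - tauEmb ρ σ v := by
  ext k
  have hk : (tauEmb ρ σ u - tauEmb ρ σ v) k = tauEmb ρ σ u k - tauEmb ρ σ v k := rfl
  rw [hk, tauEmb_apply, tauEmb_apply, tauEmb_apply]
  rcases k with i | ⟨j, b⟩
  · simp [map_sub]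
  · rcases Fin.exists_fin_two.mp ⟨b, rfl⟩ with h | h <;> subst h <;>
      simp [map_sub, Complex.sub_re, Complex.sub_im] <;> ring

lemma normSq_tauEmb (z : K) :
    ‖tauEmb ρ σ z‖ ^ 2 =
      (∑ i, (ρ i z) ^ 2) + ∑ j, 2 * ‖σ j z‖ ^ 2 := by
  rw [EuclideanSpace.norm_eq, Real.sq_sqrt (by positivity)]
  rw [Fintype.sum_sum_type]
  congr 1
  · refine Finset.sum_congr rfl fun i _ => ?_
    rw [tauEmb_apply]
    simp [Real.norm_eq_abs, sq_abs]
  · rw [Fintype.sum_prod_type]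
    refine Finset.sum_congr rfl fun j _ => ?_
    have h0 : tauEmb ρ σ z (Sum.inr (j, 0)) = Real.sqrt 2 * ((σ j) z).re := rfl
    have h1 : tauEmb ρ σ z (Sum.inr (j, 1)) = Real.sqrt 2 * ((σ j) z).im := rfl
    rw [Fin.sum_univ_two, h0, h1, Real.norm_eq_abs, Real.norm_eq_abs, sq_abs, sq_abs,
      Complex.sq_norm, Complex.normSq_apply, mul_pow, mul_pow,
      Real.sq_sqrt (by norm_num : (0:ℝ) ≤ 2)]
    ring

lemma tauEmb_norm_mul_le {c : ℝ} (hc0 : 0 ≤ c) {a : K}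
    (hρ : ∀ i, |ρ i a| ≤ c) (hσ : ∀ j, ‖σ j a‖ ≤ c) (z : K) :
    ‖tauEmb ρ σ (a * z)‖ ≤ c * ‖tauEmb ρ σ z‖ := by
  have h2 : (0:ℝ) ≤ c * ‖tauEmb ρ σ z‖ := mul_nonneg hc0 (norm_nonneg _)
  rw [← pow_le_pow_iff_left₀ (norm_nonneg _) h2 (two_ne_zero)]
  rw [normSq_tauEmb, mul_pow, normSq_tauEmb, mul_add, Finset.mul_sum, Finset.mul_sum]
  refine add_le_add (Finset.sum_le_sum fun i _ => ?_) (Finset.sum_le_sum fun j _ => ?_)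
  · rw [map_mul, mul_pow]
    have h1 : (ρ i a) ^ 2 ≤ c ^ 2 := by
      have := hρ i
      nlinarith [abs_nonneg (ρ i a), sq_abs (ρ i a)]
    exact mul_le_mul_of_nonneg_right h1 (sq_nonneg _)
  · rw [map_mul, norm_mul, mul_pow]
    have h1 : ‖σ j a‖ ^ 2 ≤ c ^ 2 :=
      pow_le_pow_left₀ (norm_nonneg _) (hσ j) 2
    nlinarith [sq_nonneg ‖σ j z‖, norm_nonneg (σ j z)]

lemma tauEmb_inj (hne : Nonempty (PackIdx s t)) {u v : K}
    (h : tauEmb ρ σ u = tauEmb ρ σ v) : u = v := by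
  have hs : Real.sqrt 2 ≠ 0 := by positivity
  obtain ⟨k⟩ := hne
  rcases k with i | ⟨j, _⟩
  · have h1 : ρ i u = ρ i v := by
      have : tauEmb ρ σ u (Sum.inl i) = tauEmb ρ σ v (Sum.inl i) := by rw [h]
      rwa [tauEmb_apply, tauEmb_apply] at this
    exact (ρ i).injective h1
  · have h0 : tauEmb ρ σ u (Sum.inr (j, 0)) = tauEmb ρ σ v (Sum.inr (j, 0)) := by rw [h]
    have h1 : tauEmb ρ σ u (Sum.inr (j, 1)) = tauEmb ρ σ v (Sum.inr (j, 1)) := by rw [h]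
    rw [tauEmb_apply, tauEmb_apply] at h0 h1
    simp only [Sum.elim_inr, if_pos rfl, if_neg (one_ne_zero : (1 : Fin 2) ≠ 0)] at h0 h1
    have hre : (σ j u).re = (σ j v).re := mul_left_cancel₀ hs h0
    have him : (σ j u).im = (σ j v).im := mul_left_cancel₀ hs h1
    exact (σ j).injective (Complex.ext hre him)


end tauAux

/-- For `0 ≤ i ≤ ℓ`,
`d_E(L_ℓ)²/d_E(L_i)² ≤ q^{2(ℓ−i)/m}·|D_K|^{1/m}`. -/
theorem statement13 {K : Type*} [Field K] [NumberField K] {s t m : ℕ}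
    (ρ : Fin s → (K →+* ℝ)) (σ : Fin t → (K →+* ℂ)) (hemb : IsEmbSystem ρ σ)
    (hm : m = s + 2 * t)
    (p : Ideal (NumberField.RingOfIntegers K)) (hp : p.IsPrime) (hp0 : p ≠ ⊥)
    (q : ℕ) (hq : Ideal.absNorm p = q) (i ℓ : ℕ) (hiℓ : i ≤ ℓ) :
    (minDist (idealImage ρ σ (p ^ ℓ))) ^ 2 / (minDist (idealImage ρ σ (p ^ i))) ^ 2 ≤
      (q : ℝ) ^ (2 * ((ℓ : ℝ) - (i : ℝ)) / (m : ℝ)) *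
        |(NumberField.discr K : ℝ)| ^ ((1 : ℝ) / (m : ℝ)) := by
  classical
  have hKC : Fintype.card (K →+* ℂ) = Module.finrank ℚ K := NumberField.Embeddings.card K ℂ
  have hcard : Fintype.card (PackIdx s t) = Fintype.card (K →+* ℂ) :=
    Fintype.card_of_bijective hemb
  have hmfin : m = Module.finrank ℚ K := by
    rw [hm, ← hKC, ← hcard]
    simp only [Fintype.card_sum, Fintype.card_prod, Fintype.card_fin]
    omega
  have hm0 : 0 < m := by rw [hmfin]; exact Module.finrank_pos
  have hne : Nonempty (PackIdx s t) := by
    rw [← Fintype.card_pos_iff, hcard, hKC]; exact Module.finrank_pos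
  set dI := minDist (idealImage ρ σ (p ^ i)) with hdI
  set dL := minDist (idealImage ρ σ (p ^ ℓ)) with hdL
  have hSnonneg : ∀ P : Set (EuclideanSpace ℝ (PackIdx s t)), 0 ≤ minDist P := by
    intro P
    apply Real.sInf_nonneg
    rintro x ⟨a, -, b, -, -, rfl⟩
    exact dist_nonneg
  have hdI0 : 0 ≤ dI := hSnonneg _
  have hdL0 : 0 ≤ dL := hSnonneg _
  rcases eq_or_lt_of_le hdI0 with hdIz | hdIpos
  · have h2 : dI ^ 2 = 0 := by rw [← hdIz]; norm_num
    rw [h2, _root_.div_zero]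
    positivity
  set D : ℝ := Real.sqrt |(NumberField.discr K : ℝ)| with hD
  have hD0 : 0 < D := Real.sqrt_pos.mpr (abs_pos.mpr
    (by exact_mod_cast NumberField.discr_ne_zero K))
  set Nq : ℝ := (q : ℝ) ^ (ℓ - i) with hNq
  have hNq0 : 0 ≤ Nq := by positivity
  set B : ℝ := (Nq * D) ^ ((m : ℝ)⁻¹) with hB
  have hB0 : 0 ≤ B := Real.rpow_nonneg (by positivity) _
  have hBpow : B ^ m = Nq * D := Real.rpow_inv_natCast_pow (by positivity) hm0.ne'
  have hA : Function.Injective (algebraMap (NumberField.RingOfIntegers K) K) :=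
    NumberField.RingOfIntegers.coe_injective
  have hkey : ∀ c : ℝ, B < c → dL ≤ c * dI := by
    intro c hBc
    have hc0 : 0 < c := lt_of_le_of_lt hB0 hBc
    have hcpow : (Ideal.absNorm ((p : Ideal (NumberField.RingOfIntegers K)) ^ (ℓ - i)) : ℝ) *
        Real.sqrt |(NumberField.discr K : ℝ)| < c ^ Module.finrank ℚ K := by
      have h1 : (Ideal.absNorm ((p : Ideal (NumberField.RingOfIntegers K)) ^ (ℓ - i)) : ℝ)
          = Nq := by
        rw [map_pow, hq, hNq]; push_cast; ring
      rw [h1, ← hD, ← hmfin, ← hBpow]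
      exact pow_lt_pow_left₀ hBc hB0 hm0.ne'
    have hJbot : ((p : Ideal (NumberField.RingOfIntegers K)) ^ (ℓ - i)) ≠ ⊥ :=
      pow_ne_zero _ hp0
    obtain ⟨α, hαJ, hα0, hφ⟩ := aux_minkowski (p ^ (ℓ - i)) hJbot hc0 hcpow
    have hSine : {d : ℝ | ∃ x ∈ idealImage ρ σ (p ^ i), ∃ y ∈ idealImage ρ σ (p ^ i),
        x ≠ y ∧ dist x y = d}.Nonempty := by
      by_contra hcon
      rw [Set.not_nonempty_iff_eq_empty] at hcon
      have h0 : dI = 0 := by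
        rw [hdI]
        unfold minDist
        rw [hcon, Real.sInf_empty]
      exact absurd h0 hdIpos.ne'
    rw [mul_comm, ← div_le_iff₀ hc0, hdI]
    unfold minDist
    apply le_csInf hSine
    rintro d ⟨x, hx, y, hy, hxy, rfl⟩
    obtain ⟨a, ha, rfl⟩ := hx
    obtain ⟨b, hb, rfl⟩ := hy
    have hab : a ≠ b := by rintro rfl; exact hxy rfl
    have hmemα : ∀ x ∈ ((p : Ideal (NumberField.RingOfIntegers K)) ^ i), α * x ∈
        ((p : Ideal (NumberField.RingOfIntegers K)) ^ ℓ) := by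
      intro x hx
      have h2 := Ideal.mul_mem_mul hαJ hx
      rwa [← pow_add, Nat.sub_add_cancel hiℓ] at h2
    have hρb : ∀ i', |ρ i' (algebraMap (NumberField.RingOfIntegers K) K α)| ≤ c := by
      intro i'
      have h3 := hφ (Complex.ofRealHom.comp (ρ i'))
      rw [RingHom.comp_apply] at h3
      simpa [Complex.norm_real] using h3.le
    have hσb : ∀ j, ‖σ j (algebraMap (NumberField.RingOfIntegers K) K α)‖ ≤ c :=
      fun j => (hφ (σ j)).le
    have hτ : dist (tauEmb ρ σ (algebraMap (NumberField.RingOfIntegers K) K (α * a)))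
          (tauEmb ρ σ (algebraMap (NumberField.RingOfIntegers K) K (α * b)))
        ≤ c * dist (tauEmb ρ σ (algebraMap (NumberField.RingOfIntegers K) K a))
          (tauEmb ρ σ (algebraMap (NumberField.RingOfIntegers K) K b)) := by
      rw [dist_eq_norm, dist_eq_norm, ← tauEmb_sub, ← tauEmb_sub, ← map_sub, ← map_sub,
        ← mul_sub, map_mul]
      exact tauEmb_norm_mul_le ρ σ hc0.le hρb hσb _
    have hmem1 : tauEmb ρ σ (algebraMap (NumberField.RingOfIntegers K) K (α * a)) ∈
        idealImage ρ σ (p ^ ℓ) := ⟨α * a, hmemα a ha, rfl⟩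
    have hmem2 : tauEmb ρ σ (algebraMap (NumberField.RingOfIntegers K) K (α * b)) ∈
        idealImage ρ σ (p ^ ℓ) := ⟨α * b, hmemα b hb, rfl⟩
    have hne2 : tauEmb ρ σ (algebraMap (NumberField.RingOfIntegers K) K (α * a)) ≠
        tauEmb ρ σ (algebraMap (NumberField.RingOfIntegers K) K (α * b)) := by
      intro hcontra
      have h4 := hA (tauEmb_inj ρ σ hne hcontra)
      exact hab (mul_left_cancel₀ hα0 h4)
    have hdLle : dL ≤ dist (tauEmb ρ σ (algebraMap (NumberField.RingOfIntegers K) K (α * a)))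
        (tauEmb ρ σ (algebraMap (NumberField.RingOfIntegers K) K (α * b))) := by
      rw [hdL]
      unfold minDist
      apply csInf_le
      · exact ⟨0, by rintro x ⟨u, -, v, -, -, rfl⟩; exact dist_nonneg⟩
      · exact ⟨_, hmem1, _, hmem2, hne2, rfl⟩
    rw [div_le_iff₀ hc0]
    calc dL ≤ _ := hdLle
      _ ≤ c * dist (tauEmb ρ σ (algebraMap (NumberField.RingOfIntegers K) K a))
          (tauEmb ρ σ (algebraMap (NumberField.RingOfIntegers K) K b)) := hτ
      _ = _ := mul_comm _ _
  have hfinal : dL ≤ B * dI := by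
    refine le_of_forall_gt_imp_ge_of_dense fun e he => ?_
    have hcB : B < e / dI := (lt_div_iff₀ hdIpos).mpr he
    have h5 := hkey (e / dI) hcB
    rwa [div_mul_cancel₀ _ hdIpos.ne'] at h5
  have hsq : dL ^ 2 / dI ^ 2 ≤ B ^ 2 := by
    rw [div_le_iff₀ (by positivity)]
    calc dL ^ 2 ≤ (B * dI) ^ 2 := pow_le_pow_left₀ hdL0 hfinal 2
      _ = B ^ 2 * dI ^ 2 := mul_pow _ _ _
  refine hsq.trans (le_of_eq ?_)
  have h6 : B ^ 2 = (Nq * D) ^ ((m : ℝ)⁻¹ * 2) := by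
    rw [hB, ← Real.rpow_natCast ((Nq * D) ^ ((m : ℝ)⁻¹)) 2, ← Real.rpow_mul (by positivity)]
    norm_num
  rw [h6, Real.mul_rpow hNq0 hD0.le]
  congr 1
  · rw [hNq, ← Real.rpow_natCast (q : ℝ) (ℓ - i), ← Real.rpow_mul (by positivity)]
    congr 1
    rw [Nat.cast_sub hiℓ]
    ring
  · rw [hD, Real.sqrt_eq_rpow, ← Real.rpow_mul (abs_nonneg _)]
    congr 1
    ring


end
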